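/- With H_1 = span{e_1, …, e_k}, H_2 = span{cos α_j e_j + sin α_j e_{i+k+1−j} : j = 1, …, i}, and x = Σ_{j=1}^i ρ_j (cos θ_j e_j + sin θ_j e_{i+k+1−j}) + y_1 + y_2 with y_1 ∈ span{e_{i+1},…,e_k} and y_2 ∈ (H_1+H_2)^⊥, for every natural number m one has (R_{H_2} R_{H_1})^m x = Σ_{j=1}^i ρ_j (cos(2mα_j + θ_j) e_j + sin(2mα_j + θ_j) e_{i+k+1−j}) + (−1)^m y_1 + y_2. -/

import Mathlib

open Real

lemma aux_mem_orth {E : Type*} [NormedAddCommGroup E] [InnerProductSpace ℝ E] {ι : Type*}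
    (f : ι → E) {v : E} (h : ∀ j, (inner ℝ (f j) v : ℝ) = 0) :
    v ∈ (Submodule.span ℝ (Set.range f))ᗮ := by
  rw [Submodule.mem_orthogonal]
  intro u hu
  induction hu using Submodule.span_induction with
  | mem u hu => obtain ⟨j, rfl⟩ := hu; exact h j
  | zero => simp
  | add u w _ _ hu hw => rw [inner_add_left, hu, hw, add_zero]
  | smul c u _ hu => rw [real_inner_smul_left, hu, mul_zero]

lemma reflection_pair_step (n i k : ℕ) (hik : i ≤ k) (hkn : k + i ≤ n)
    (e : OrthonormalBasis (Fin n) ℝ (EuclideanSpace ℝ (Fin n)))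
    (α ρ φ : Fin i → ℝ)
    (H₁ H₂ : Submodule ℝ (EuclideanSpace ℝ (Fin n)))
    (hH₁ : H₁ = Submodule.span ℝ (Set.range fun j : Fin k => e ⟨j, by omega⟩))
    (hH₂ : H₂ = Submodule.span ℝ (Set.range fun j : Fin i =>
      cos (α j) • e ⟨j, by omega⟩ + sin (α j) • e ⟨i + k - 1 - j, by omega⟩))
    (y₁ y₂ : EuclideanSpace ℝ (Fin n))
    (hy₁ : y₁ ∈ Submodule.span ℝ (Set.range fun j : Fin (k - i) => e ⟨i + j, by omega⟩))
    (hy₂ : y₂ ∈ (H₁ ⊔ H₂)ᗮ) :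
    Submodule.reflection H₂ (Submodule.reflection H₁ ((∑ j : Fin i, ρ j •
        (cos (φ j) • e ⟨j, by omega⟩ + sin (φ j) • e ⟨i + k - 1 - j, by omega⟩)) + y₁ + y₂))
      = (∑ j : Fin i, ρ j • (cos (2 * α j + φ j) • e ⟨j, by omega⟩ +
          sin (2 * α j + φ j) • e ⟨i + k - 1 - j, by omega⟩)) + (-1 : ℝ) • y₁ + y₂ := by
  have key : ∀ a b : Fin n, (inner ℝ (e a) (e b) : ℝ) = if a = b then 1 else 0 :=
    orthonormal_iff_ite.mp e.orthonormal
  set A : EuclideanSpace ℝ (Fin n) :=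
    ∑ j : Fin i, (ρ j * cos (φ j)) • e ⟨j, by omega⟩ with hA
  set B : EuclideanSpace ℝ (Fin n) :=
    ∑ j : Fin i, (ρ j * sin (φ j)) • e ⟨i + k - 1 - j, by omega⟩ with hB
  set C : EuclideanSpace ℝ (Fin n) :=
    ∑ j : Fin i, (ρ j * cos (α j + φ j)) •
      (cos (α j) • e ⟨j, by omega⟩ + sin (α j) • e ⟨i + k - 1 - j, by omega⟩) with hC
  set D : EuclideanSpace ℝ (Fin n) :=
    ∑ j : Fin i, (ρ j * sin (α j + φ j)) •
      ((-sin (α j)) • e ⟨j, by omega⟩ + cos (α j) • e ⟨i + k - 1 - j, by omega⟩) with hD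
  -- memberships
  have hy₁H₁ : y₁ ∈ H₁ := by
    subst hH₁
    refine Submodule.span_le.mpr ?_ hy₁
    rintro _ ⟨j, rfl⟩
    exact Submodule.subset_span ⟨⟨i + j, by omega⟩, rfl⟩
  have hmemA : A + y₁ ∈ H₁ := by
    refine Submodule.add_mem _ ?_ hy₁H₁
    subst hH₁
    exact Submodule.sum_mem _ fun j _ =>
      Submodule.smul_mem _ _ (Submodule.subset_span ⟨⟨j, by omega⟩, rfl⟩)
  have hmemB : B + y₂ ∈ H₁ᗮ := by
    refine Submodule.add_mem _ ?_ (Submodule.orthogonal_le le_sup_left hy₂)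
    subst hH₁
    refine Submodule.sum_mem _ fun j _ => Submodule.smul_mem _ _ (aux_mem_orth _ fun j' => ?_)
    rw [key, if_neg]
    simp only [ne_eq, Fin.mk.injEq]
    omega
  have hmemC : C ∈ H₂ := by
    subst hH₂
    exact Submodule.sum_mem _ fun j _ =>
      Submodule.smul_mem _ _ (Submodule.subset_span ⟨j, rfl⟩)
  have hmemD : D ∈ H₂ᗮ := by
    subst hH₂
    refine Submodule.sum_mem _ fun j _ => Submodule.smul_mem _ _ (aux_mem_orth _ fun j' => ?_)
    have hj := j.2
    have hj' := j'.2
    simp only [inner_add_left, inner_add_right, real_inner_smul_left, real_inner_smul_right,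
      key, Fin.mk.injEq]
    rcases eq_or_ne j' j with rfl | hne
    · split_ifs <;> first | (exfalso; omega) | ring
    · have hne' : (j' : ℕ) ≠ (j : ℕ) := fun h => hne (Fin.ext h)
      split_ifs <;> first | (exfalso; omega) | ring
  have hy₁H₂ : y₁ ∈ H₂ᗮ := by
    subst hH₂
    refine Submodule.span_le.mpr ?_ hy₁
    rintro _ ⟨j, rfl⟩
    refine aux_mem_orth _ fun j' => ?_
    have hj := j.2
    have hj' := j'.2
    simp only [inner_add_left, real_inner_smul_left, key, Fin.mk.injEq]
    split_ifs <;> first | (exfalso; omega) | ring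
  have hmemW : -D + y₁ + -y₂ ∈ H₂ᗮ :=
    Submodule.add_mem _ (Submodule.add_mem _ (Submodule.neg_mem _ hmemD) hy₁H₂)
      (Submodule.neg_mem _ (Submodule.orthogonal_le le_sup_right hy₂))
  -- algebra
  have hsplit : (∑ j : Fin i, ρ j •
      (cos (φ j) • e ⟨j, by omega⟩ + sin (φ j) • e ⟨i + k - 1 - j, by omega⟩)) + y₁ + y₂
      = (A + y₁) + (B + y₂) := by
    rw [hA, hB]
    have : (∑ j : Fin i, ρ j •
        (cos (φ j) • e ⟨j, by omega⟩ + sin (φ j) • e ⟨i + k - 1 - j, by omega⟩))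
        = ∑ j : Fin i, ((ρ j * cos (φ j)) • e ⟨j, by omega⟩
            + (ρ j * sin (φ j)) • e ⟨i + k - 1 - j, by omega⟩) :=
      Finset.sum_congr rfl fun j _ => by rw [smul_add, smul_smul, smul_smul]
    rw [this, Finset.sum_add_distrib]
    abel
  have hCD : A - B = C - D := by
    rw [hA, hB, hC, hD, ← Finset.sum_sub_distrib, ← Finset.sum_sub_distrib]
    refine Finset.sum_congr rfl fun j _ => ?_
    simp only [cos_add, sin_add]
    match_scalars
    · linear_combination (-(ρ j * cos (φ j))) * sin_sq_add_cos_sq (α j)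
    · linear_combination (ρ j * sin (φ j)) * sin_sq_add_cos_sq (α j)
  have hCpD : C + D = ∑ j : Fin i, ρ j • (cos (2 * α j + φ j) • e ⟨j, by omega⟩ +
      sin (2 * α j + φ j) • e ⟨i + k - 1 - j, by omega⟩) := by
    rw [hC, hD, ← Finset.sum_add_distrib]
    refine Finset.sum_congr rfl fun j _ => ?_
    have h2 : 2 * α j + φ j = α j + (α j + φ j) := by ring
    rw [h2]
    simp only [cos_add, sin_add]
    match_scalars <;> ring
  rw [hsplit, map_add, Submodule.reflection_mem_subspace_eq_self hmemA,
    Submodule.reflection_mem_subspace_orthogonalComplement_eq_neg hmemB]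
  have hsplit2 : (A + y₁) + -(B + y₂) = C + (-D + y₁ + -y₂) := by
    have h1 : (A + y₁) + -(B + y₂) = (A - B) + y₁ + -y₂ := by abel
    rw [h1, hCD]; abel
  rw [hsplit2, map_add, Submodule.reflection_mem_subspace_eq_self hmemC,
    Submodule.reflection_mem_subspace_orthogonalComplement_eq_neg hmemW]
  rw [← hCpD, neg_one_smul]
  abel


/-- Lemma 3.3, formula (3.6): the action of `(R_{H₂} R_{H₁})^m` on a point written in the
adapted coordinates. Indices are zero-based: `e_j` for `j = 1,…,i` becomes `e ⟨j⟩` for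
`j : Fin i`, and `e_{i+k+1−j}` becomes `e ⟨i+k−1−j⟩`. -/
theorem reflection_pair_iterate_formula (n i k : ℕ) (hik : i ≤ k) (hkn : i + k ≤ n)
    (e : OrthonormalBasis (Fin n) ℝ (EuclideanSpace ℝ (Fin n)))
    (α ρ θ : Fin i → ℝ)
    (H₁ H₂ : Submodule ℝ (EuclideanSpace ℝ (Fin n)))
    (hH₁ : H₁ = Submodule.span ℝ (Set.range fun j : Fin k => e ⟨j, by omega⟩))
    (hH₂ : H₂ = Submodule.span ℝ (Set.range fun j : Fin i =>
      cos (α j) • e ⟨j, by omega⟩ + sin (α j) • e ⟨i + k - 1 - j, by omega⟩))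
    (y₁ y₂ x : EuclideanSpace ℝ (Fin n))
    (hy₁ : y₁ ∈ Submodule.span ℝ (Set.range fun j : Fin (k - i) => e ⟨i + j, by omega⟩))
    (hy₂ : y₂ ∈ (H₁ ⊔ H₂)ᗮ)
    (hx : x = (∑ j : Fin i, ρ j •
        (cos (θ j) • e ⟨j, by omega⟩ + sin (θ j) • e ⟨i + k - 1 - j, by omega⟩)) + y₁ + y₂)
    (m : ℕ) :
    (⇑(Submodule.reflection H₂) ∘ ⇑(Submodule.reflection H₁))^[m] x = (∑ j : Fin i, ρ j •
        (cos (2 * m * α j + θ j) • e ⟨j, by omega⟩ +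
          sin (2 * m * α j + θ j) • e ⟨i + k - 1 - j, by omega⟩)) +
      ((-1 : ℝ) ^ m) • y₁ + y₂ := by
  induction m with
  | zero =>
    simp only [Function.iterate_zero, id_eq, Nat.cast_zero, mul_zero, zero_mul, zero_add,
      pow_zero, one_smul, hx]
  | succ m ih =>
    rw [Function.iterate_succ_apply', Function.comp_apply, ih]
    have hstep := reflection_pair_step n i k hik (by omega) e α ρ (fun j => 2 * m * α j + θ j)
      H₁ H₂ hH₁ hH₂ (((-1 : ℝ) ^ m) • y₁) y₂ (Submodule.smul_mem _ _ hy₁) hy₂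
    rw [hstep, smul_smul]
    have harg : ∀ j : Fin i, 2 * α j + (2 * (m : ℝ) * α j + θ j)
        = 2 * ((m : ℝ) + 1) * α j + θ j := fun j => by ring
    have hpow : (-1 : ℝ) * (-1 : ℝ) ^ m = (-1 : ℝ) ^ (m + 1) := by
      rw [pow_succ, mul_comm]
    push_cast
    simp only [harg, hpow]
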